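/- (Maximum DL UDN rate, Proposition 3.) Fix reals α_μ, α_m > 2, C_L ∈ (0, 1], ζ > 0, W_μ, W_m > 0, W_mu ∈ [0, W_m], and density ratios λ̂_μ, λ̂_m > 1, and set γ_μ = (α_μ/2)·log λ̂_μ and γ_m = (α_m·C_L/2)·log λ̂_m. For x ∈ ℝ let R_u(x) = x·γ_μ + W_mu·γ_m and R_d(x) = (W_μ − x)·γ_μ + (W_m − W_mu)·γ_m, and assume the feasibility conditions R_u(0) ≤ ζ·R_d(0) and R_u(W_μ) ≥ ζ·R_d(W_μ). Then the greatest value of R_d(x) over { x ∈ [0, W_μ] : R_u(x) ≥ ζ·R_d(x) } equals R_d* = (1/(2(1 + ζ))) · (α_m·C_L·W_m·log λ̂_m + α_μ·W_μ·log λ̂_μ) = (1/(2(1 + ζ))) · log( λ̂_m^{α_m C_L W_m} · λ̂_μ^{α_μ W_μ} ). -/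

import Mathlib

/-- Proposition 3 (maximum DL UDN rate). With `γ_μ = (α_μ/2) log λ̂_μ`,
`γ_m = (α_m C_L/2) log λ̂_m`, and feasibility, the greatest value of `R_d` over the feasible set
equals `R_d* = (1/(2(1+ζ))) (α_m C_L W_m log λ̂_m + α_μ W_μ log λ̂_μ)
= (1/(2(1+ζ))) log(λ̂_m^{α_m C_L W_m} λ̂_μ^{α_μ W_μ})`. -/
theorem stmt_14 (αμ αm CL ζ Wμ Wm Wmu Lμ Lm : ℝ)
    (hαμ : 2 < αμ) (hαm : 2 < αm) (hCL : CL ∈ Set.Ioc (0:ℝ) 1) (hζ : 0 < ζ)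
    (hWμ : 0 < Wμ) (hWm : 0 < Wm) (hWmu : Wmu ∈ Set.Icc (0:ℝ) Wm)
    (hLμ : 1 < Lμ) (hLm : 1 < Lm)
    (γμ γm : ℝ) (hγμ : γμ = αμ / 2 * Real.log Lμ) (hγm : γm = αm * CL / 2 * Real.log Lm)
    (Ru Rd : ℝ → ℝ)
    (hRu : ∀ x, Ru x = x * γμ + Wmu * γm)
    (hRd : ∀ x, Rd x = (Wμ - x) * γμ + (Wm - Wmu) * γm)
    (hfeas0 : Ru 0 ≤ ζ * Rd 0) (hfeas1 : ζ * Rd Wμ ≤ Ru Wμ) :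
    IsGreatest {y : ℝ | ∃ x ∈ Set.Icc (0:ℝ) Wμ, ζ * Rd x ≤ Ru x ∧ y = Rd x}
      (1 / (2 * (1 + ζ)) * (αm * CL * Wm * Real.log Lm + αμ * Wμ * Real.log Lμ)) ∧
    1 / (2 * (1 + ζ)) * (αm * CL * Wm * Real.log Lm + αμ * Wμ * Real.log Lμ) =
      1 / (2 * (1 + ζ)) * Real.log (Lm ^ (αm * CL * Wm) * Lμ ^ (αμ * Wμ)) := by
  have hLμ0 : (0:ℝ) < Lμ := lt_trans one_pos hLμ
  have hLm0 : (0:ℝ) < Lm := lt_trans one_pos hLm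
  have hlogμ : 0 < Real.log Lμ := Real.log_pos hLμ
  have hlogm : 0 < Real.log Lm := Real.log_pos hLm
  have hγμ0 : 0 < γμ := by rw [hγμ]; positivity
  have hγm0 : 0 < γm := by
    rw [hγm]
    have := hCL.1
    positivity
  have hζ1 : (0:ℝ) < 1 + ζ := by linarith
  set M : ℝ := 1 / (2 * (1 + ζ)) * (αm * CL * Wm * Real.log Lm + αμ * Wμ * Real.log Lμ)
    with hM
  have hS : (1 + ζ) * M = Wμ * γμ + Wm * γm := by
    rw [hM, hγμ, hγm]; field_simp; ring
  constructor
  · constructor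
    · -- membership: the optimal x*
      refine ⟨Wμ - (M - (Wm - Wmu) * γm) / γμ, ?_, ?_, ?_⟩
      · constructor
        · -- 0 ≤ x*, i.e. (M - (Wm-Wmu)γm)/γμ ≤ Wμ, i.e. M ≤ Rd 0
          have h0 : (1 + ζ) * M ≤ (1 + ζ) * (Wμ * γμ + (Wm - Wmu) * γm) := by
            rw [hRu, hRd] at hfeas0
            nlinarith [hfeas0]
          have hM0 : M ≤ Wμ * γμ + (Wm - Wmu) * γm :=
            le_of_mul_le_mul_left h0 hζ1
          have : (M - (Wm - Wmu) * γm) / γμ ≤ Wμ := by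
            rw [div_le_iff₀ hγμ0]; nlinarith
          linarith
        · -- x* ≤ Wμ, i.e. (M - (Wm-Wmu)γm)/γμ ≥ 0, i.e. Rd Wμ ≤ M
          have h1 : (1 + ζ) * ((Wm - Wmu) * γm) ≤ (1 + ζ) * M := by
            rw [hRu, hRd] at hfeas1
            nlinarith [hfeas1]
          have hM1 : (Wm - Wmu) * γm ≤ M := le_of_mul_le_mul_left h1 hζ1
          have : 0 ≤ (M - (Wm - Wmu) * γm) / γμ :=
            div_nonneg (by linarith) (le_of_lt hγμ0)
          linarith
      · -- feasibility at x*: ζ * Rd x* ≤ Ru x*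
        rw [hRu, hRd]
        have hγμ' : γμ ≠ 0 := ne_of_gt hγμ0
        field_simp
        linarith [hS]
      · -- Rd x* = M
        rw [hRd]
        field_simp
        ring
    · -- upper bound
      rintro y ⟨x, hx, hfe, rfl⟩
      rw [hRu, hRd] at hfe
      have : (1 + ζ) * Rd x ≤ (1 + ζ) * M := by
        rw [hS, hRd]; nlinarith
      exact le_of_mul_le_mul_left this hζ1
  · -- log identity
    rw [Real.log_mul (by positivity) (by positivity),
      Real.log_rpow hLm0, Real.log_rpow hLμ0]
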